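/- Let A, Y, S, Z, U be random variables on a discrete probability space (A, Y, S binary; Z, U finite-valued), all conditioning events positive. Suppose: (i) Z ⊥ (Y, S) | (A, U); (ii) S ⊥ A | (Y, U); (iii) q satisfies E[q(a, Z) | A=a, U=u] = 1/P(A=a | U=u); (iv) q* satisfies (1−η)/P(A=a|U=u) < E[q*(a, Z) | A=a, U=u] < 1/[(1−η)·P(A=a|U=u)] for all a, u, for some η ∈ (0,1). Define β* = log( E[q*(A,Z)·A·Y | S=1] / E[q*(A,Z)·(1−A)·Y | S=1] ) and β = log( E[q(A,Z)·A·Y | S=1] / E[q(A,Z)·(1−A)·Y | S=1] ), assuming all four expectations are positive. Then 2·log(1−η) < β* − β < −2·log(1−η). -/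

import Mathlib

open scoped BigOperators
open Real

attribute [local instance] Classical.propDecidable

noncomputable section

variable {Ω : Type*}

/-- Probability of an event under weight function `P` on a finite sample space. -/
def pr [Fintype Ω] (P : Ω → ℝ) (E : Ω → Prop) : ℝ :=
  ∑ ω, if E ω then P ω else 0

/-- Conditional probability `P(E | F)`. -/
def cpr [Fintype Ω] (P : Ω → ℝ) (E F : Ω → Prop) : ℝ :=
  pr P (fun ω => E ω ∧ F ω) / pr P F

/-- Conditional expectation `E[f | F]`. -/
def cexp [Fintype Ω] (P : Ω → ℝ) (f : Ω → ℝ) (F : Ω → Prop) : ℝ :=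
  (∑ ω, if F ω then f ω * P ω else 0) / pr P F

/-- Conditional independence `f ⊥ g | h` under `P`. -/
def CondIndep [Fintype Ω] (P : Ω → ℝ) {α β γ : Type*}
    (f : Ω → α) (g : Ω → β) (h : Ω → γ) : Prop :=
  ∀ a b c, pr P (fun ω => h ω = c) ≠ 0 →
    cpr P (fun ω => f ω = a ∧ g ω = b) (fun ω => h ω = c) =
      cpr P (fun ω => f ω = a) (fun ω => h ω = c) *
        cpr P (fun ω => g ω = b) (fun ω => h ω = c)

-- helpers
lemma pr_nonneg [Fintype Ω] (P : Ω → ℝ) (hP : ∀ ω, 0 ≤ P ω) (E : Ω → Prop) :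
    0 ≤ pr P E := by
  apply Finset.sum_nonneg; intro ω _
  split_ifs
  · exact hP ω
  · exact le_refl 0

lemma pr_congr [Fintype Ω] (P : Ω → ℝ) {E F : Ω → Prop} (h : ∀ ω, E ω ↔ F ω) :
    pr P E = pr P F := by
  unfold pr; exact Finset.sum_congr rfl fun ω _ => by simp [h ω]

lemma pr_mono [Fintype Ω] (P : Ω → ℝ) (hP : ∀ ω, 0 ≤ P ω) {E F : Ω → Prop}
    (h : ∀ ω, E ω → F ω) : pr P E ≤ pr P F := by
  apply Finset.sum_le_sum; intro ω _
  split_ifs with h1 h2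
  · exact le_refl _
  · exact absurd (h ω h1) h2
  · exact hP ω
  · exact le_refl _

lemma pr_pos [Fintype Ω] (P : Ω → ℝ) (hP : ∀ ω, 0 ≤ P ω) {E : Ω → Prop}
    (h : pr P E ≠ 0) : 0 < pr P E :=
  lt_of_le_of_ne (pr_nonneg P hP E) (Ne.symm h)

lemma pr_zero_of [Fintype Ω] (P : Ω → ℝ) (hP : ∀ ω, 0 ≤ P ω) {E : Ω → Prop}
    (h : pr P E = 0) : ∀ ω, E ω → P ω = 0 := by
  intro ω hE
  have := (Finset.sum_eq_zero_iff_of_nonneg (by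
    intro x _; split_ifs; exacts [hP x, le_refl 0])).mp h ω (Finset.mem_univ ω)
  simpa [hE] using this

/-- weighted sum over an event (numerator of `cexp`). -/
def wsum [Fintype Ω] (P : Ω → ℝ) (f : Ω → ℝ) (E : Ω → Prop) : ℝ :=
  ∑ ω, if E ω then f ω * P ω else 0

lemma cexp_eq_wsum [Fintype Ω] (P : Ω → ℝ) (f : Ω → ℝ) (F : Ω → Prop) :
    cexp P f F = wsum P f F / pr P F := rfl

lemma wsum_congr [Fintype Ω] (P : Ω → ℝ) {f g : Ω → ℝ} {E F : Ω → Prop}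
    (h : ∀ ω, (E ω ↔ F ω) ∧ (E ω → f ω = g ω)) : wsum P f E = wsum P g F := by
  unfold wsum
  refine Finset.sum_congr rfl fun ω _ => ?_
  by_cases hE : E ω
  · rw [if_pos hE, if_pos ((h ω).1.mp hE), (h ω).2 hE]
  · rw [if_neg hE, if_neg (fun hF => hE ((h ω).1.mpr hF))]

/-- expand a sum with a function of `Z ω` over the values of `Z`. -/
lemma sum_expand [Fintype Ω] {𝒵 : Type*} [Fintype 𝒵] (P : Ω → ℝ)
    (Z : Ω → 𝒵) (g : 𝒵 → ℝ) (cond : Ω → Prop) :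
    wsum P (fun ω => g (Z ω)) cond
      = ∑ z, g z * pr P (fun ω => Z ω = z ∧ cond ω) := by
  simp only [wsum, pr, Finset.mul_sum, mul_ite, mul_zero]
  rw [Finset.sum_comm]
  refine Finset.sum_congr rfl fun ω _ => ?_
  by_cases hc : cond ω <;> simp [hc]

lemma factor [Fintype Ω] {𝒵 𝒰 : Type*} [Fintype 𝒵] [Fintype 𝒰]
    (P : Ω → ℝ)
    (A Y S : Ω → ℕ) (Z : Ω → 𝒵) (U : Ω → 𝒰)
    (hZ : CondIndep P Z (fun ω => (Y ω, S ω)) (fun ω => (A ω, U ω)))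
    (g : 𝒵 → ℝ) (a : ℕ) (u : 𝒰)
    (hD : pr P (fun ω => A ω = a ∧ U ω = u) ≠ 0) :
    wsum P (fun ω => g (Z ω)) (fun ω => A ω = a ∧ U ω = u ∧ Y ω = 1 ∧ S ω = 1)
      = cexp P (fun ω => g (Z ω)) (fun ω => A ω = a ∧ U ω = u)
        * pr P (fun ω => (Y ω = 1 ∧ S ω = 1) ∧ A ω = a ∧ U ω = u) := by
  have hD' : pr P (fun ω => (A ω, U ω) = (a, u)) = pr P (fun ω => A ω = a ∧ U ω = u) :=
    pr_congr P (fun ω => by simp [Prod.ext_iff])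
  have key : ∀ z : 𝒵,
      pr P (fun ω => Z ω = z ∧ A ω = a ∧ U ω = u ∧ Y ω = 1 ∧ S ω = 1)
        = pr P (fun ω => Z ω = z ∧ A ω = a ∧ U ω = u)
          * pr P (fun ω => (Y ω = 1 ∧ S ω = 1) ∧ A ω = a ∧ U ω = u)
          / pr P (fun ω => A ω = a ∧ U ω = u) := by
    intro z
    have h := hZ z (1, 1) (a, u) (by rw [hD']; exact hD)
    simp only [cpr, hD'] at h
    rw [pr_congr P (E := fun ω => (Z ω = z ∧ (Y ω, S ω) = (1,1)) ∧ (A ω, U ω) = (a,u))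
        (F := fun ω => Z ω = z ∧ A ω = a ∧ U ω = u ∧ Y ω = 1 ∧ S ω = 1)
        (fun ω => by simp only [Prod.mk.injEq]; try tauto),
      pr_congr P (E := fun ω => Z ω = z ∧ (A ω, U ω) = (a,u))
        (F := fun ω => Z ω = z ∧ A ω = a ∧ U ω = u)
        (fun ω => by simp only [Prod.mk.injEq]; try tauto),
      pr_congr P (E := fun ω => (Y ω, S ω) = (1,1) ∧ (A ω, U ω) = (a,u))
        (F := fun ω => (Y ω = 1 ∧ S ω = 1) ∧ A ω = a ∧ U ω = u)
        (fun ω => by simp only [Prod.mk.injEq]; try tauto)] at h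
    field_simp at h
    rw [eq_div_iff hD]
    exact mul_right_cancel₀ hD (by rw [h])
  rw [sum_expand P Z g (fun ω => A ω = a ∧ U ω = u ∧ Y ω = 1 ∧ S ω = 1)]
  rw [cexp_eq_wsum, sum_expand P Z g (fun ω => A ω = a ∧ U ω = u)]
  rw [div_mul_eq_mul_div, Finset.sum_mul, Finset.sum_div]
  refine Finset.sum_congr rfl fun z _ => ?_
  rw [key z]; ring

lemma wsum_decomp [Fintype Ω] {𝒰 : Type*} [Fintype 𝒰] (P : Ω → ℝ)
    (f : Ω → ℝ) (U : Ω → 𝒰) (E : Ω → Prop) :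
    wsum P f E = ∑ u, wsum P f (fun ω => E ω ∧ U ω = u) := by
  unfold wsum
  rw [Finset.sum_comm]
  refine Finset.sum_congr rfl fun ω _ => ?_
  by_cases hE : E ω <;> simp [hE]

lemma collapse1 [Fintype Ω] {𝒵 : Type*} [Fintype 𝒵] (P : Ω → ℝ)
    (A Y S : Ω → ℕ) (Z : Ω → 𝒵)
    (hA : ∀ ω, A ω = 0 ∨ A ω = 1) (hY : ∀ ω, Y ω = 0 ∨ Y ω = 1)
    (g : ℕ → 𝒵 → ℝ) :
    wsum P (fun ω => g (A ω) (Z ω) * (A ω : ℝ) * (Y ω : ℝ)) (fun ω => S ω = 1)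
      = wsum P (fun ω => g 1 (Z ω)) (fun ω => A ω = 1 ∧ Y ω = 1 ∧ S ω = 1) := by
  unfold wsum
  refine Finset.sum_congr rfl fun ω _ => ?_
  rcases hA ω with h | h <;> rcases hY ω with h' | h' <;>
    by_cases hs : S ω = 1 <;> simp [h, h', hs]

lemma collapse0 [Fintype Ω] {𝒵 : Type*} [Fintype 𝒵] (P : Ω → ℝ)
    (A Y S : Ω → ℕ) (Z : Ω → 𝒵)
    (hA : ∀ ω, A ω = 0 ∨ A ω = 1) (hY : ∀ ω, Y ω = 0 ∨ Y ω = 1)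
    (g : ℕ → 𝒵 → ℝ) :
    wsum P (fun ω => g (A ω) (Z ω) * (1 - (A ω : ℝ)) * (Y ω : ℝ)) (fun ω => S ω = 1)
      = wsum P (fun ω => g 0 (Z ω)) (fun ω => A ω = 0 ∧ Y ω = 1 ∧ S ω = 1) := by
  unfold wsum
  refine Finset.sum_congr rfl fun ω _ => ?_
  rcases hA ω with h | h <;> rcases hY ω with h' | h' <;>
    by_cases hs : S ω = 1 <;> simp [h, h', hs]

lemma per_u [Fintype Ω] {𝒵 𝒰 : Type*} [Fintype 𝒵] [Fintype 𝒰]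
    (P : Ω → ℝ) (hP : ∀ ω, 0 ≤ P ω)
    (A Y S : Ω → ℕ) (Z : Ω → 𝒵) (U : Ω → 𝒰)
    (hZ : CondIndep P Z (fun ω => (Y ω, S ω)) (fun ω => (A ω, U ω)))
    (η : ℝ) (hη : 0 < η ∧ η < 1)
    (qa qs : 𝒵 → ℝ) (a : ℕ) (u : 𝒰)
    (hq : pr P (fun ω => A ω = a ∧ U ω = u) ≠ 0 →
      cexp P (fun ω => qa (Z ω)) (fun ω => A ω = a ∧ U ω = u)
        = (cpr P (fun ω => A ω = a) (fun ω => U ω = u))⁻¹)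
    (hqs : pr P (fun ω => A ω = a ∧ U ω = u) ≠ 0 →
      (1 - η) / cpr P (fun ω => A ω = a) (fun ω => U ω = u) <
          cexp P (fun ω => qs (Z ω)) (fun ω => A ω = a ∧ U ω = u) ∧
        cexp P (fun ω => qs (Z ω)) (fun ω => A ω = a ∧ U ω = u) <
          1 / ((1 - η) * cpr P (fun ω => A ω = a) (fun ω => U ω = u))) :
    ((1 - η) * wsum P (fun ω => qa (Z ω)) (fun ω => (A ω = a ∧ Y ω = 1 ∧ S ω = 1) ∧ U ω = u)
        ≤ wsum P (fun ω => qs (Z ω)) (fun ω => (A ω = a ∧ Y ω = 1 ∧ S ω = 1) ∧ U ω = u) ∧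
      wsum P (fun ω => qs (Z ω)) (fun ω => (A ω = a ∧ Y ω = 1 ∧ S ω = 1) ∧ U ω = u)
        ≤ (1 - η)⁻¹ * wsum P (fun ω => qa (Z ω)) (fun ω => (A ω = a ∧ Y ω = 1 ∧ S ω = 1) ∧ U ω = u)) ∧
    (0 < wsum P (fun ω => qa (Z ω)) (fun ω => (A ω = a ∧ Y ω = 1 ∧ S ω = 1) ∧ U ω = u) →
      (1 - η) * wsum P (fun ω => qa (Z ω)) (fun ω => (A ω = a ∧ Y ω = 1 ∧ S ω = 1) ∧ U ω = u)
          < wsum P (fun ω => qs (Z ω)) (fun ω => (A ω = a ∧ Y ω = 1 ∧ S ω = 1) ∧ U ω = u) ∧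
        wsum P (fun ω => qs (Z ω)) (fun ω => (A ω = a ∧ Y ω = 1 ∧ S ω = 1) ∧ U ω = u)
          < (1 - η)⁻¹ * wsum P (fun ω => qa (Z ω)) (fun ω => (A ω = a ∧ Y ω = 1 ∧ S ω = 1) ∧ U ω = u)) := by
  have h1η : 0 < 1 - η := by linarith [hη.2]
  have hre : ∀ g : 𝒵 → ℝ,
      wsum P (fun ω => g (Z ω)) (fun ω => (A ω = a ∧ Y ω = 1 ∧ S ω = 1) ∧ U ω = u)
        = wsum P (fun ω => g (Z ω)) (fun ω => A ω = a ∧ U ω = u ∧ Y ω = 1 ∧ S ω = 1) :=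
    fun g => wsum_congr P (fun ω => ⟨by tauto, fun _ => rfl⟩)
  rw [hre qa, hre qs]
  by_cases hD : pr P (fun ω => A ω = a ∧ U ω = u) = 0
  · have hz : ∀ g : 𝒵 → ℝ,
        wsum P (fun ω => g (Z ω)) (fun ω => A ω = a ∧ U ω = u ∧ Y ω = 1 ∧ S ω = 1) = 0 := by
      intro g
      unfold wsum
      apply Finset.sum_eq_zero
      intro ω _
      split_ifs with h
      · rw [pr_zero_of P hP hD ω ⟨h.1, h.2.1⟩, mul_zero]
      · rfl
    rw [hz qa, hz qs]
    refine ⟨⟨by simp, by simp⟩, fun h => absurd h (by simp)⟩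
  · have hDpos : 0 < pr P (fun ω => A ω = a ∧ U ω = u) := pr_pos P hP hD
    have hUpos : 0 < pr P (fun ω => U ω = u) :=
      lt_of_lt_of_le hDpos (pr_mono P hP fun ω h => h.2)
    have hp : 0 < cpr P (fun ω => A ω = a) (fun ω => U ω = u) := by
      simp only [cpr]
      exact div_pos hDpos hUpos
    have hfq := factor P A Y S Z U hZ qa a u hD
    have hfs := factor P A Y S Z U hZ qs a u hD
    rw [hfq, hfs, hq hD]
    obtain ⟨hb1, hb2⟩ := hqs hD
    set C := pr P (fun ω => (Y ω = 1 ∧ S ω = 1) ∧ A ω = a ∧ U ω = u) with hCdef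
    set e := cexp P (fun ω => qs (Z ω)) (fun ω => A ω = a ∧ U ω = u) with hedef
    set p := cpr P (fun ω => A ω = a) (fun ω => U ω = u) with hpdef
    have hC : 0 ≤ C := pr_nonneg P hP _
    rcases eq_or_lt_of_le hC with hC0 | hCpos
    · rw [← hC0]
      refine ⟨⟨by simp, by simp⟩, fun h => absurd h (by simp)⟩
    · have s1 : (1 - η) * (p⁻¹ * C) < e * C := by
        calc (1 - η) * (p⁻¹ * C) = ((1 - η) / p) * C := by rw [div_eq_mul_inv]; ring
          _ < e * C := mul_lt_mul_of_pos_right hb1 hCpos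
      have s2 : e * C < (1 - η)⁻¹ * (p⁻¹ * C) := by
        calc e * C < (1 / ((1 - η) * p)) * C := mul_lt_mul_of_pos_right hb2 hCpos
          _ = (1 - η)⁻¹ * (p⁻¹ * C) := by field_simp; try ring
      exact ⟨⟨le_of_lt s1, le_of_lt s2⟩, fun _ => ⟨s1, s2⟩⟩

/-- Appendix K bias bound: an approximate bridge function `q*`
yields a plug-in log risk ratio within `−2·log(1−η)` of the exact one. -/
theorem stmt19 [Fintype Ω] {𝒵 𝒰 : Type*} [Fintype 𝒵] [Fintype 𝒰]
    (P : Ω → ℝ) (hP : ∀ ω, 0 ≤ P ω) (hPsum : ∑ ω, P ω = 1)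
    (A Y S : Ω → ℕ) (Z : Ω → 𝒵) (U : Ω → 𝒰)
    (hA : ∀ ω, A ω = 0 ∨ A ω = 1) (hY : ∀ ω, Y ω = 0 ∨ Y ω = 1)
    (hS : ∀ ω, S ω = 0 ∨ S ω = 1)
    (hsel : pr P (fun ω => S ω = 1) ≠ 0)
    -- (i) Z ⊥ (Y, S) | (A, U)
    (hZ : CondIndep P Z (fun ω => (Y ω, S ω)) (fun ω => (A ω, U ω)))
    -- (ii) S ⊥ A | (Y, U)
    (hSA : CondIndep P S A (fun ω => (Y ω, U ω)))
    -- (iii) exact bridge function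
    (q : ℕ → 𝒵 → ℝ)
    (hq : ∀ (a : ℕ) (u : 𝒰), (a = 0 ∨ a = 1) →
      pr P (fun ω => A ω = a ∧ U ω = u) ≠ 0 →
      cexp P (fun ω => q a (Z ω)) (fun ω => A ω = a ∧ U ω = u) =
        (cpr P (fun ω => A ω = a) (fun ω => U ω = u))⁻¹)
    -- (iv) approximate bridge function
    (η : ℝ) (hη : 0 < η ∧ η < 1)
    (qstar : ℕ → 𝒵 → ℝ)
    (hqstar : ∀ (a : ℕ) (u : 𝒰), (a = 0 ∨ a = 1) →
      pr P (fun ω => A ω = a ∧ U ω = u) ≠ 0 →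
      (1 - η) / cpr P (fun ω => A ω = a) (fun ω => U ω = u) <
          cexp P (fun ω => qstar a (Z ω)) (fun ω => A ω = a ∧ U ω = u) ∧
        cexp P (fun ω => qstar a (Z ω)) (fun ω => A ω = a ∧ U ω = u) <
          1 / ((1 - η) * cpr P (fun ω => A ω = a) (fun ω => U ω = u)))
    -- positivity of the four moments
    (h1 : 0 < cexp P (fun ω => qstar (A ω) (Z ω) * (A ω : ℝ) * (Y ω : ℝ))
      (fun ω => S ω = 1))
    (h2 : 0 < cexp P (fun ω => qstar (A ω) (Z ω) * (1 - (A ω : ℝ)) * (Y ω : ℝ))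
      (fun ω => S ω = 1))
    (h3 : 0 < cexp P (fun ω => q (A ω) (Z ω) * (A ω : ℝ) * (Y ω : ℝ))
      (fun ω => S ω = 1))
    (h4 : 0 < cexp P (fun ω => q (A ω) (Z ω) * (1 - (A ω : ℝ)) * (Y ω : ℝ))
      (fun ω => S ω = 1)) :
    2 * Real.log (1 - η) <
        Real.log
            (cexp P (fun ω => qstar (A ω) (Z ω) * (A ω : ℝ) * (Y ω : ℝ))
                (fun ω => S ω = 1) /
              cexp P (fun ω => qstar (A ω) (Z ω) * (1 - (A ω : ℝ)) * (Y ω : ℝ))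
                (fun ω => S ω = 1)) -
          Real.log
            (cexp P (fun ω => q (A ω) (Z ω) * (A ω : ℝ) * (Y ω : ℝ))
                (fun ω => S ω = 1) /
              cexp P (fun ω => q (A ω) (Z ω) * (1 - (A ω : ℝ)) * (Y ω : ℝ))
                (fun ω => S ω = 1)) ∧
      Real.log
            (cexp P (fun ω => qstar (A ω) (Z ω) * (A ω : ℝ) * (Y ω : ℝ))
                (fun ω => S ω = 1) /
              cexp P (fun ω => qstar (A ω) (Z ω) * (1 - (A ω : ℝ)) * (Y ω : ℝ))
                (fun ω => S ω = 1)) -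
          Real.log
            (cexp P (fun ω => q (A ω) (Z ω) * (A ω : ℝ) * (Y ω : ℝ))
                (fun ω => S ω = 1) /
              cexp P (fun ω => q (A ω) (Z ω) * (1 - (A ω : ℝ)) * (Y ω : ℝ))
                (fun ω => S ω = 1)) <
        -(2 * Real.log (1 - η)) := by
  obtain ⟨hη0, hη1⟩ := hη
  have h1η : 0 < 1 - η := by linarith
  have hSpos : 0 < pr P (fun ω => S ω = 1) := pr_pos P hP hsel
  have e1 : cexp P (fun ω => qstar (A ω) (Z ω) * (A ω : ℝ) * (Y ω : ℝ)) (fun ω => S ω = 1)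
      = wsum P (fun ω => qstar 1 (Z ω)) (fun ω => A ω = 1 ∧ Y ω = 1 ∧ S ω = 1) / pr P (fun ω => S ω = 1) := by
    rw [cexp_eq_wsum, collapse1 P A Y S Z hA hY qstar]
  have e2 : cexp P (fun ω => qstar (A ω) (Z ω) * (1 - (A ω : ℝ)) * (Y ω : ℝ)) (fun ω => S ω = 1)
      = wsum P (fun ω => qstar 0 (Z ω)) (fun ω => A ω = 0 ∧ Y ω = 1 ∧ S ω = 1) / pr P (fun ω => S ω = 1) := by
    rw [cexp_eq_wsum, collapse0 P A Y S Z hA hY qstar]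
  have e3 : cexp P (fun ω => q (A ω) (Z ω) * (A ω : ℝ) * (Y ω : ℝ)) (fun ω => S ω = 1)
      = wsum P (fun ω => q 1 (Z ω)) (fun ω => A ω = 1 ∧ Y ω = 1 ∧ S ω = 1) / pr P (fun ω => S ω = 1) := by
    rw [cexp_eq_wsum, collapse1 P A Y S Z hA hY q]
  have e4 : cexp P (fun ω => q (A ω) (Z ω) * (1 - (A ω : ℝ)) * (Y ω : ℝ)) (fun ω => S ω = 1)
      = wsum P (fun ω => q 0 (Z ω)) (fun ω => A ω = 0 ∧ Y ω = 1 ∧ S ω = 1) / pr P (fun ω => S ω = 1) := by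
    rw [cexp_eq_wsum, collapse0 P A Y S Z hA hY q]
  rw [e1] at h1; rw [e2] at h2; rw [e3] at h3; rw [e4] at h4
  have hSne : pr P (fun ω => S ω = 1) ≠ 0 := ne_of_gt hSpos
  have hx1p : 0 < wsum P (fun ω => qstar 1 (Z ω)) (fun ω => A ω = 1 ∧ Y ω = 1 ∧ S ω = 1) := by
    have := mul_pos h1 hSpos; rwa [div_mul_cancel₀ _ hSne] at this
  have hx0p : 0 < wsum P (fun ω => qstar 0 (Z ω)) (fun ω => A ω = 0 ∧ Y ω = 1 ∧ S ω = 1) := by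
    have := mul_pos h2 hSpos; rwa [div_mul_cancel₀ _ hSne] at this
  have hy1p : 0 < wsum P (fun ω => q 1 (Z ω)) (fun ω => A ω = 1 ∧ Y ω = 1 ∧ S ω = 1) := by
    have := mul_pos h3 hSpos; rwa [div_mul_cancel₀ _ hSne] at this
  have hy0p : 0 < wsum P (fun ω => q 0 (Z ω)) (fun ω => A ω = 0 ∧ Y ω = 1 ∧ S ω = 1) := by
    have := mul_pos h4 hSpos; rwa [div_mul_cancel₀ _ hSne] at this
  have arm : ∀ a : ℕ, a = 0 ∨ a = 1 →
      0 < wsum P (fun ω => q a (Z ω)) (fun ω => A ω = a ∧ Y ω = 1 ∧ S ω = 1) →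
      (1 - η) * wsum P (fun ω => q a (Z ω)) (fun ω => A ω = a ∧ Y ω = 1 ∧ S ω = 1)
          < wsum P (fun ω => qstar a (Z ω)) (fun ω => A ω = a ∧ Y ω = 1 ∧ S ω = 1) ∧
        wsum P (fun ω => qstar a (Z ω)) (fun ω => A ω = a ∧ Y ω = 1 ∧ S ω = 1)
          < (1 - η)⁻¹ * wsum P (fun ω => q a (Z ω)) (fun ω => A ω = a ∧ Y ω = 1 ∧ S ω = 1) := by
    intro a ha hpos
    have hdq := wsum_decomp P (fun ω => q a (Z ω)) U (fun ω => A ω = a ∧ Y ω = 1 ∧ S ω = 1)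
    have hds := wsum_decomp P (fun ω => qstar a (Z ω)) U (fun ω => A ω = a ∧ Y ω = 1 ∧ S ω = 1)
    rw [hdq] at hpos
    rw [hdq, hds]
    have hb := fun u => per_u P hP A Y S Z U hZ η ⟨hη0, hη1⟩ (q a) (qstar a) a u
      (fun hD => hq a u ha hD) (fun hD => hqstar a u ha hD)
    obtain ⟨u0, -, hu0⟩ := Finset.exists_lt_of_sum_lt (f := fun _ => (0 : ℝ)) (by simpa using hpos)
    constructor
    · rw [Finset.mul_sum]
      exact Finset.sum_lt_sum (fun u _ => (hb u).1.1) ⟨u0, Finset.mem_univ u0, ((hb u0).2 hu0).1⟩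
    · rw [Finset.mul_sum]
      exact Finset.sum_lt_sum (fun u _ => (hb u).1.2) ⟨u0, Finset.mem_univ u0, ((hb u0).2 hu0).2⟩
  obtain ⟨c1l, c1u⟩ := arm 1 (Or.inr rfl) hy1p
  obtain ⟨c0l, c0u⟩ := arm 0 (Or.inl rfl) hy0p
  rw [e1, e2, e3, e4]
  have hq1 : (wsum P (fun ω => qstar 1 (Z ω)) (fun ω => A ω = 1 ∧ Y ω = 1 ∧ S ω = 1) / pr P (fun ω => S ω = 1)) / (wsum P (fun ω => qstar 0 (Z ω)) (fun ω => A ω = 0 ∧ Y ω = 1 ∧ S ω = 1) / pr P (fun ω => S ω = 1))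
      = wsum P (fun ω => qstar 1 (Z ω)) (fun ω => A ω = 1 ∧ Y ω = 1 ∧ S ω = 1) / wsum P (fun ω => qstar 0 (Z ω)) (fun ω => A ω = 0 ∧ Y ω = 1 ∧ S ω = 1) := by
    rw [div_div_div_comm, div_self hSne, div_one]
  have hq2 : (wsum P (fun ω => q 1 (Z ω)) (fun ω => A ω = 1 ∧ Y ω = 1 ∧ S ω = 1) / pr P (fun ω => S ω = 1)) / (wsum P (fun ω => q 0 (Z ω)) (fun ω => A ω = 0 ∧ Y ω = 1 ∧ S ω = 1) / pr P (fun ω => S ω = 1))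
      = wsum P (fun ω => q 1 (Z ω)) (fun ω => A ω = 1 ∧ Y ω = 1 ∧ S ω = 1) / wsum P (fun ω => q 0 (Z ω)) (fun ω => A ω = 0 ∧ Y ω = 1 ∧ S ω = 1) := by
    rw [div_div_div_comm, div_self hSne, div_one]
  rw [hq1, hq2, Real.log_div (ne_of_gt hx1p) (ne_of_gt hx0p),
    Real.log_div (ne_of_gt hy1p) (ne_of_gt hy0p)]
  have L1 : Real.log (1 - η) + Real.log (wsum P (fun ω => q 1 (Z ω)) (fun ω => A ω = 1 ∧ Y ω = 1 ∧ S ω = 1)) < Real.log (wsum P (fun ω => qstar 1 (Z ω)) (fun ω => A ω = 1 ∧ Y ω = 1 ∧ S ω = 1)) := by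
    have := Real.log_lt_log (by positivity) c1l
    rwa [Real.log_mul (ne_of_gt h1η) (ne_of_gt hy1p)] at this
  have L2 : Real.log (wsum P (fun ω => qstar 1 (Z ω)) (fun ω => A ω = 1 ∧ Y ω = 1 ∧ S ω = 1)) < -Real.log (1 - η) + Real.log (wsum P (fun ω => q 1 (Z ω)) (fun ω => A ω = 1 ∧ Y ω = 1 ∧ S ω = 1)) := by
    have := Real.log_lt_log hx1p c1u
    rwa [Real.log_mul (ne_of_gt (inv_pos.mpr h1η)) (ne_of_gt hy1p), Real.log_inv] at this
  have L3 : Real.log (1 - η) + Real.log (wsum P (fun ω => q 0 (Z ω)) (fun ω => A ω = 0 ∧ Y ω = 1 ∧ S ω = 1)) < Real.log (wsum P (fun ω => qstar 0 (Z ω)) (fun ω => A ω = 0 ∧ Y ω = 1 ∧ S ω = 1)) := by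
    have := Real.log_lt_log (by positivity) c0l
    rwa [Real.log_mul (ne_of_gt h1η) (ne_of_gt hy0p)] at this
  have L4 : Real.log (wsum P (fun ω => qstar 0 (Z ω)) (fun ω => A ω = 0 ∧ Y ω = 1 ∧ S ω = 1)) < -Real.log (1 - η) + Real.log (wsum P (fun ω => q 0 (Z ω)) (fun ω => A ω = 0 ∧ Y ω = 1 ∧ S ω = 1)) := by
    have := Real.log_lt_log hx0p c0u
    rwa [Real.log_mul (ne_of_gt (inv_pos.mpr h1η)) (ne_of_gt hy0p), Real.log_inv] at this
  constructor <;> linarith
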